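/- Let G be a locally compact abelian group with Haar measure μ and let S ⊆ G be a set whose uniform asymptotic upper density with respect to the counting measure of S is positive and finite: 0 < D̄(#|_S;μ) < ∞. Then the difference set S − S is syndetic. -/

import Mathlib

open MeasureTheory Set Pointwise Filter ENNReal

/-- The uniform asymptotic upper density of a measure `ν` with respect to `μ`:
`inf` over nonempty compact sets `C` of `sup` over Borel sets `V` with compact
closure of `ν V / μ (C + V)`, where `C + V` is a Minkowski sum. -/
noncomputable def uaud {G : Type*} [AddCommGroup G] [TopologicalSpace G] [MeasurableSpace G]
    (ν μ : Measure G) : ℝ≥0∞ :=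
  ⨅ C ∈ {C : Set G | IsCompact C ∧ C.Nonempty},
    ⨆ V ∈ {V : Set G | MeasurableSet V ∧ IsCompact (closure V)},
      ν V / μ (C + V)

/-- The counting measure of the set `S`: the sum of Dirac measures at the points of `S`,
so that `countOn S V = #(S ∩ V)` for measurable `V`. -/
noncomputable def countOn {G : Type*} [MeasurableSpace G] (S : Set G) : Measure G :=
  Measure.sum (fun s : S => Measure.dirac (s : G))

/-- `T` is syndetic if a compact set of translates of `T` covers `G`. -/
def IsSyndetic {G : Type*} [AddCommGroup G] [TopologicalSpace G] (T : Set G) : Prop :=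
  ∃ K : Set G, IsCompact K ∧ K + T = Set.univ

section Aux

lemma aux_singleton_add_eq_vadd {G : Type*} [AddCommGroup G] (a : G) (s : Set G) :
    {a} + s = a +ᵥ s := by
  rw [singleton_add, ← Set.image_vadd]; rfl

lemma aux_add_vadd_comm {G : Type*} [AddCommGroup G] (a : G) (s t : Set G) :
    s + (a +ᵥ t) = a +ᵥ (s + t) := by
  rw [← aux_singleton_add_eq_vadd, ← aux_singleton_add_eq_vadd, add_left_comm]

variable {G : Type*} [MeasurableSpace G] [MeasurableSingletonClass G]

lemma countOn_apply' (S V : Set G) (hV : MeasurableSet V) :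
    countOn S V = Measure.count ((↑) ⁻¹' V : Set ↥S) := by
  rw [countOn, Measure.sum_apply _ hV, Measure.count_apply (measurable_subtype_coe hV),
    Set.encard, ← ENNReal.tsum_one,
    tsum_subtype ((↑) ⁻¹' V : Set ↥S) (fun _ => (1:ℝ≥0∞))]
  congr 1
  ext s
  rw [Measure.dirac_apply' _ hV]
  by_cases h : (s:G) ∈ V
  · rw [Set.indicator_of_mem h, Set.indicator_of_mem (show s ∈ ((↑) ⁻¹' V : Set ↥S) from h)]
    rfl
  · rw [Set.indicator_of_notMem h,
      Set.indicator_of_notMem (show s ∉ ((↑) ⁻¹' V : Set ↥S) from h)]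

lemma card_le_countOn (S V : Set G) (hV : MeasurableSet V) (E : Finset G)
    (hE : ↑E ⊆ S ∩ V) : (E.card : ℝ≥0∞) ≤ countOn S V := by
  rw [countOn, Measure.sum_apply _ hV]
  let emb : E ↪ ↥S := ⟨fun x => ⟨x.1, (hE x.2).1⟩, by
    intro a b hab
    injection hab with h
    exact Subtype.ext h⟩
  calc (E.card : ℝ≥0∞) = ∑ s ∈ E.attach.map emb, Measure.dirac (s:G) V := by
        rw [Finset.sum_congr rfl (fun s hs => ?_), Finset.sum_const, Finset.card_map,
          Finset.card_attach, nsmul_eq_mul, mul_one]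
        · simp only [Finset.mem_map] at hs
          obtain ⟨x, -, rfl⟩ := hs
          rw [Measure.dirac_apply' _ hV]
          have hm : (↑(emb x) : G) ∈ V := by exact (hE x.2).2
          rw [Set.indicator_of_mem hm]; rfl
    _ ≤ ∑' (s : ↥S), Measure.dirac (s:G) V := ENNReal.sum_le_tsum _

lemma exists_finset_of_countOn_ne_top (S V : Set G) (hV : MeasurableSet V)
    (hfin : countOn S V ≠ ⊤) :
    ∃ E : Finset G, ↑E = S ∩ V ∧ (E.card : ℝ≥0∞) = countOn S V := by
  rw [countOn_apply' S V hV] at hfin ⊢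
  have hPfin : ((↑) ⁻¹' V : Set ↥S).Finite := Measure.count_apply_lt_top.mp hfin.lt_top
  have himg : (S ∩ V) = Subtype.val '' ((↑) ⁻¹' V : Set ↥S) := by
    ext x; constructor
    · rintro ⟨hxS, hxV⟩; exact ⟨⟨x, hxS⟩, hxV, rfl⟩
    · rintro ⟨⟨y, hyS⟩, hyV, rfl⟩; exact ⟨hyS, hyV⟩
  have hfinSV : (S ∩ V).Finite := himg ▸ hPfin.image _
  refine ⟨hfinSV.toFinset, by simp, ?_⟩
  rw [Measure.count_apply_finite _ hPfin]
  norm_cast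
  rw [← Set.ncard_eq_toFinset_card _ hfinSV, ← Set.ncard_eq_toFinset_card _ hPfin, himg,
    Set.ncard_image_of_injective _ Subtype.val_injective]

end Aux

lemma exists_translates {G : Type*} [AddCommGroup G] [TopologicalSpace G]
    [IsTopologicalAddGroup G] (S : Set G) (hns : ¬ IsSyndetic (S - S))
    (Kb : Set G) (hKb : IsCompact Kb) (n : ℕ) :
    ∃ t : Fin n → G, ∀ i j, i ≠ j → t i - t j ∉ (S - S) + Kb := by
  induction n with
  | zero => exact ⟨fun _ => 0, fun i => i.elim0⟩
  | succ n ih =>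
    obtain ⟨t, ht⟩ := ih
    have hK' : IsCompact ((Set.range t + (Kb ∪ -Kb))) :=
      ((Set.finite_range t).isCompact.add (hKb.union hKb.neg))
    obtain ⟨g, hg⟩ : ∃ g, g ∉ (Set.range t + (Kb ∪ -Kb)) + (S - S) := by
      by_contra h
      push_neg at h
      exact hns ⟨_, hK', Set.eq_univ_of_forall h⟩
    refine ⟨Fin.snoc t g, fun i j hij => ?_⟩
    have hmem : ∀ (a : G) (u w : G), u ∈ S - S → w ∈ Kb ∪ -Kb → a ∈ Set.range t →
        a + (u + w) ∈ (Set.range t + (Kb ∪ -Kb)) + (S - S) := by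
      intro a u w hu hw ha
      have h : a + (u + w) = (a + w) + u := by abel
      rw [h]
      exact add_mem_add (add_mem_add ha hw) hu
    intro hbad
    rcases Set.mem_add.mp hbad with ⟨u, hu, w, hw, huw⟩
    rcases Fin.eq_castSucc_or_eq_last i with ⟨i', rfl⟩ | rfl
    · rcases Fin.eq_castSucc_or_eq_last j with ⟨j', rfl⟩ | rfl
      · have hij' : i' ≠ j' := fun h => hij (by rw [h])
        refine ht i' j' hij' ?_
        rw [Fin.snoc_castSucc, Fin.snoc_castSucc] at hbad
        exact hbad
      · rw [Fin.snoc_castSucc, Fin.snoc_last] at huw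
        apply hg
        have hgeq : g = t i' + ((-u) + (-w)) := by
          have h : t i' - g = u + w := huw.symm
          rw [sub_eq_iff_eq_add] at h
          rw [h]; abel
        rw [hgeq]
        refine hmem _ _ _ ?_ ?_ ⟨i', rfl⟩
        · rcases Set.mem_sub.mp hu with ⟨a, ha, b, hb, rfl⟩
          rw [neg_sub]
          exact Set.sub_mem_sub hb ha
        · exact Or.inr (Set.neg_mem_neg.mpr hw)
    · rcases Fin.eq_castSucc_or_eq_last j with ⟨j', rfl⟩ | rfl
      · rw [Fin.snoc_last, Fin.snoc_castSucc] at huw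
        apply hg
        have hgeq : g = t j' + (u + w) := by
          have h : g - t j' = u + w := huw.symm
          rw [sub_eq_iff_eq_add] at h
          rw [h]; abel
        rw [hgeq]
        exact hmem _ _ _ hu (Or.inl hw) ⟨j', rfl⟩
      · exact hij rfl

theorem diff_set_syndetic_of_pos_finite_count_uaud {G : Type*} [AddCommGroup G]
    [TopologicalSpace G] [IsTopologicalAddGroup G] [LocallyCompactSpace G] [T2Space G]
    [MeasurableSpace G] [BorelSpace G]
    (μ : Measure G) [μ.IsAddHaarMeasure] (S : Set G)
    (hpos : 0 < uaud (countOn S) μ) (hfin : uaud (countOn S) μ < ⊤) :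
    IsSyndetic (S - S) := by
  classical
  by_contra hsynd
  set ν := countOn S with hνdef
  set d := uaud ν μ with hd
  have hd0 : d ≠ 0 := hpos.ne'
  have hdt : d ≠ ⊤ := hfin.ne
  have h2dt : (2:ℝ≥0∞) * d ≠ ⊤ := ENNReal.mul_ne_top (by norm_num) hdt
  -- Step A: the compact set C₀ giving the upper bound
  have h2d : uaud ν μ < 2 * d := by
    rw [← hd, two_mul]
    exact ENNReal.lt_add_right hdt hd0
  rw [uaud] at h2d
  obtain ⟨C₀, h2d⟩ := iInf_lt_iff.mp h2d
  obtain ⟨hC₀P, h2d⟩ := iInf_lt_iff.mp h2d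
  have hupper : ∀ V : Set G, MeasurableSet V → IsCompact (closure V) →
      ν V ≤ 2 * d * μ (C₀ + V) := by
    intro V hV hc
    have hratio : ν V / μ (C₀ + V) < 2 * d :=
      lt_of_le_of_lt
        (le_iSup₂ (f := fun (V : Set G)
          (_ : V ∈ {V : Set G | MeasurableSet V ∧ IsCompact (closure V)}) =>
            ν V / μ (C₀ + V)) V ⟨hV, hc⟩) h2d
    have hfinmeas : μ (C₀ + V) ≠ ⊤ := by
      refine ((measure_mono (Set.add_subset_add_left subset_closure)).trans_lt
        (hC₀P.1.add hc).measure_lt_top).ne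
    by_cases h0 : μ (C₀ + V) = 0
    · by_cases hν0 : ν V = 0
      · simp [hν0]
      · rw [h0, ENNReal.div_zero hν0] at hratio
        exact absurd hratio (not_lt.mpr le_top)
    · exact (ENNReal.div_le_iff_le_mul (Or.inl h0) (Or.inl hfinmeas)).mp hratio.le
  -- Step B: compact neighborhood C₁ of 0
  obtain ⟨C₁, hC₁comp, hC₁nhds⟩ := exists_compact_mem_nhds (0:G)
  have h0C₁ : (0:G) ∈ C₁ := mem_of_mem_nhds hC₁nhds
  have hμC₁pos : 0 < μ C₁ := by
    calc (0:ℝ≥0∞) < μ (interior C₁) :=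
          isOpen_interior.measure_pos μ ⟨0, mem_interior_iff_mem_nhds.mpr hC₁nhds⟩
      _ ≤ μ C₁ := measure_mono interior_subset
  have hμC₁fin : μ C₁ ≠ ⊤ := hC₁comp.measure_lt_top.ne
  set Kb := C₁ + (-C₁) with hKb
  have hKbcomp : IsCompact Kb := hC₁comp.add hC₁comp.neg
  set m := 2 * d * μ (C₀ + (-C₁)) with hm
  have hmfin : m ≠ ⊤ := ENNReal.mul_ne_top h2dt (hC₀P.1.add hC₁comp.neg).measure_lt_top.ne
  -- d/2 and n
  have hd2 : d / 2 ≠ 0 := by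
    simp [ENNReal.div_eq_zero_iff, hd0]
  have hd2lt : d / 2 < d := ENNReal.half_lt_self hd0 hdt
  have hd2t : d / 2 ≠ ⊤ := (ENNReal.half_le_self.trans_lt hfin).ne
  set x := d / 2 * μ C₁ with hx
  have hx0 : x ≠ 0 := mul_ne_zero hd2 hμC₁pos.ne'
  have hxt : x ≠ ⊤ := ENNReal.mul_ne_top hd2t hμC₁fin
  obtain ⟨n, hn⟩ := ENNReal.exists_nat_gt (ENNReal.div_lt_top hmfin hx0).ne
  have hmlt : m < (n:ℝ≥0∞) * x := (ENNReal.div_lt_iff (Or.inl hx0) (Or.inl hxt)).mp hn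
  have hn0 : n ≠ 0 := by
    rintro rfl
    simp only [Nat.cast_zero, zero_mul] at hmlt
    exact (not_lt.mpr (zero_le : 0 ≤ m)) hmlt
  -- translates
  obtain ⟨t, ht⟩ := exists_translates S hsynd Kb hKbcomp n
  set Cw := Set.range t + C₁ with hCw
  have hCwP : Cw ∈ {C : Set G | IsCompact C ∧ C.Nonempty} := by
    refine ⟨(Set.finite_range t).isCompact.add hC₁comp, ?_⟩
    exact ⟨t ⟨0, Nat.pos_of_ne_zero hn0⟩ + 0,
      add_mem_add (Set.mem_range_self _) h0C₁⟩
  -- witness V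
  have hdle : d ≤ ⨆ V ∈ {V : Set G | MeasurableSet V ∧ IsCompact (closure V)},
      ν V / μ (Cw + V) := by
    rw [hd, uaud]
    exact iInf₂_le Cw hCwP
  have hlt : d / 2 < ⨆ V ∈ {V : Set G | MeasurableSet V ∧ IsCompact (closure V)},
      ν V / μ (Cw + V) := lt_of_lt_of_le hd2lt hdle
  obtain ⟨V, hlt⟩ := lt_iSup_iff.mp hlt
  obtain ⟨hVQ, hlt⟩ := lt_iSup_iff.mp hlt
  have hVmeas : MeasurableSet V := hVQ.1
  have hVcl : IsCompact (closure V) := hVQ.2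
  have hkgt : d / 2 * μ (Cw + V) < ν V := ENNReal.mul_lt_of_lt_div hlt
  have hνfin : ν V ≠ ⊤ := by
    refine ((hupper V hVmeas hVcl).trans_lt ?_).ne
    exact ENNReal.mul_lt_top h2dt.lt_top
      ((measure_mono (Set.add_subset_add_left subset_closure)).trans_lt
        (hC₀P.1.add hVcl).measure_lt_top)
  obtain ⟨E, hEeq, hEcard⟩ := exists_finset_of_countOn_ne_top S V hVmeas hνfin
  have hν0 : ν V ≠ 0 := by
    intro h
    rw [h] at hkgt
    exact (not_lt.mpr zero_le) hkgt
  have hEne : E.Nonempty := by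
    rw [← Finset.card_pos, Nat.pos_iff_ne_zero]
    intro h
    rw [h] at hEcard
    exact hν0 (by exact_mod_cast hEcard.symm)
  obtain ⟨v, hvE⟩ := hEne
  have hvSV : v ∈ S ∩ V := by rw [← hEeq]; exact_mod_cast hvE
  -- μ (Cw + V) bounds
  have hZfin : μ (Cw + V) ≠ ⊤ := by
    refine ((measure_mono (Set.add_subset_add_left subset_closure)).trans_lt
      (hCwP.1.add hVcl).measure_lt_top).ne
  have hZpos : 0 < μ (Cw + V) := by
    have hsub : (t ⟨0, Nat.pos_of_ne_zero hn0⟩ + v) +ᵥ C₁ ⊆ Cw + V := by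
      rintro y ⟨c, hc, rfl⟩
      simp only [vadd_eq_add]
      have h : (t ⟨0, Nat.pos_of_ne_zero hn0⟩ + v) + c
          = (t ⟨0, Nat.pos_of_ne_zero hn0⟩ + c) + v := by abel
      rw [h]
      exact add_mem_add (add_mem_add (Set.mem_range_self _) hc) hvSV.2
    calc (0:ℝ≥0∞) < μ C₁ := hμC₁pos
      _ = μ ((t ⟨0, Nat.pos_of_ne_zero hn0⟩ + v) +ᵥ C₁) := (measure_vadd μ _ C₁).symm
      _ ≤ μ (Cw + V) := measure_mono hsub
  -- compactness / measurability of translated C₁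
  have hvaddC : ∀ (a : G) (W : Set G), IsCompact W → IsCompact (a +ᵥ W) := by
    intro a W hW
    rw [← Set.image_vadd]
    exact hW.image (continuous_const_vadd a)
  have hvaddM : ∀ (a : G), MeasurableSet (a +ᵥ C₁) := fun a =>
    (hvaddC a C₁ hC₁comp).isClosed.measurableSet
  -- the function F
  set F : G → ℝ≥0∞ := fun y =>
    ∑ i : Fin n, ∑ s ∈ E, ((s + t i) +ᵥ C₁).indicator (fun _ => (1:ℝ≥0∞)) y with hF
  -- integral of F
  have hFint : ∫⁻ y, F y ∂μ = (n : ℝ≥0∞) * (E.card : ℝ≥0∞) * μ C₁ := by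
    rw [hF]
    rw [lintegral_finset_sum _ (fun i _ =>
      Finset.measurable_sum _ (fun s _ => measurable_const.indicator (hvaddM _)))]
    have hinner : ∀ i : Fin n,
        ∫⁻ y, ∑ s ∈ E, ((s + t i) +ᵥ C₁).indicator (fun _ => (1:ℝ≥0∞)) y ∂μ
          = (E.card : ℝ≥0∞) * μ C₁ := by
      intro i
      rw [lintegral_finset_sum _ (fun s _ => measurable_const.indicator (hvaddM _))]
      rw [Finset.sum_congr rfl (fun s _ => ?_), Finset.sum_const, nsmul_eq_mul]
      · rw [lintegral_indicator_const (hvaddM _) 1, one_mul, measure_vadd]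
    rw [Finset.sum_congr rfl (fun i _ => hinner i), Finset.sum_const, nsmul_eq_mul,
      Finset.card_univ, Fintype.card_fin, ← mul_assoc]
  -- inner sums as cards of filters
  have hkey : ∀ (y : G) (i : Fin n),
      (∑ s ∈ E, ((s + t i) +ᵥ C₁).indicator (fun _ => (1:ℝ≥0∞)) y)
        = ((E.filter (fun s => y ∈ (s + t i) +ᵥ C₁)).card : ℝ≥0∞) := by
    intro y i
    rw [Finset.card_filter, Nat.cast_sum]
    refine Finset.sum_congr rfl fun s _ => ?_
    by_cases h : y ∈ (s + t i) +ᵥ C₁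
    · simp [Set.indicator_of_mem h, h]
    · simp [Set.indicator_of_notMem h, h]
  -- each filter card bounded by m
  have hcard_le : ∀ (y : G) (i : Fin n),
      ((E.filter (fun s => y ∈ (s + t i) +ᵥ C₁)).card : ℝ≥0∞) ≤ m := by
    intro y i
    set W : Set G := (y - t i) +ᵥ (-C₁) with hW
    have hWc : IsCompact W := hvaddC _ _ hC₁comp.neg
    have hWm : MeasurableSet W := hWc.isClosed.measurableSet
    have hsub : ↑(E.filter (fun s => y ∈ (s + t i) +ᵥ C₁)) ⊆ S ∩ W := by
      intro s hs
      rw [Finset.mem_coe, Finset.mem_filter] at hs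
      obtain ⟨hsE, hx⟩ := hs
      have hsSV : s ∈ S ∩ V := by rw [← hEeq]; exact_mod_cast hsE
      refine ⟨hsSV.1, ?_⟩
      rcases hx with ⟨c, hc, hcx⟩
      refine ⟨-c, Set.neg_mem_neg.mpr hc, ?_⟩
      simp only [vadd_eq_add] at hcx ⊢
      rw [← hcx]; abel
    calc ((E.filter (fun s => y ∈ (s + t i) +ᵥ C₁)).card : ℝ≥0∞)
        ≤ countOn S W := card_le_countOn S W hWm _ hsub
      _ ≤ 2 * d * μ (C₀ + W) := hupper W hWm (by rw [hWc.isClosed.closure_eq]; exact hWc)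
      _ = m := by
          rw [hm]
          congr 1
          rw [hW, aux_add_vadd_comm, measure_vadd]
  -- at most one nonzero filter
  have hone : ∀ (y : G) (i j : Fin n), i ≠ j →
      (E.filter (fun s => y ∈ (s + t i) +ᵥ C₁)).Nonempty →
      (E.filter (fun s => y ∈ (s + t j) +ᵥ C₁)).card = 0 := by
    intro y i j hij ⟨s₀, hs₀⟩
    rw [Finset.card_eq_zero, Finset.filter_eq_empty_iff]
    intro s hsE hx
    rw [Finset.mem_filter] at hs₀
    obtain ⟨hs₀E, hx₀⟩ := hs₀
    rcases hx₀ with ⟨c₀, hc₀, hcx₀⟩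
    rcases hx with ⟨c, hc, hcx⟩
    simp only [vadd_eq_add] at hcx₀ hcx
    refine ht i j hij ?_
    have hs₀SV : s₀ ∈ S ∩ V := by rw [← hEeq]; exact_mod_cast hs₀E
    have hsSV : s ∈ S ∩ V := by rw [← hEeq]; exact_mod_cast hsE
    have h1 : s₀ + t i + c₀ = s + t j + c := by
      rw [show s₀ + t i + c₀ = (s₀ + t i) + c₀ from rfl, hcx₀, ← hcx]
    have h2 : t i = s + t j + c - s₀ - c₀ := by rw [← h1]; abel
    have heq : t i - t j = (s - s₀) + (c - c₀) := by rw [h2]; abel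
    rw [heq]
    refine add_mem_add (Set.sub_mem_sub hsSV.1 hs₀SV.1) ?_
    rw [hKb, sub_eq_add_neg]
    exact add_mem_add hc (Set.neg_mem_neg.mpr hc₀)
  -- pointwise bound
  have hFle : ∀ y, F y ≤ (toMeasurable μ (Cw + V)).indicator (fun _ => m) y := by
    intro y
    by_cases hex : ∃ i : Fin n, (E.filter (fun s => y ∈ (s + t i) +ᵥ C₁)).Nonempty
    · obtain ⟨i₀, hi₀⟩ := hex
      have hyZ : y ∈ Cw + V := by
        obtain ⟨s₀, hs₀⟩ := hi₀
        rw [Finset.mem_filter] at hs₀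
        rcases hs₀.2 with ⟨c, hc, hcx⟩
        simp only [vadd_eq_add] at hcx
        have hs₀SV : s₀ ∈ S ∩ V := by rw [← hEeq]; exact_mod_cast hs₀.1
        have h : (s₀ + t i₀) + c = (t i₀ + c) + s₀ := by abel
        rw [← hcx, h]
        exact add_mem_add (add_mem_add (Set.mem_range_self _) hc) hs₀SV.2
      rw [Set.indicator_of_mem (subset_toMeasurable μ _ hyZ)]
      have hFy : F y = ((E.filter (fun s => y ∈ (s + t i₀) +ᵥ C₁)).card : ℝ≥0∞) := by
        have h1 : F y = ∑ i : Fin n,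
            ((E.filter (fun s => y ∈ (s + t i) +ᵥ C₁)).card : ℝ≥0∞) :=
          Finset.sum_congr rfl (fun i _ => hkey y i)
        rw [h1]
        refine Finset.sum_eq_single i₀ (fun j _ hj => ?_) (fun h => absurd (Finset.mem_univ i₀) h)
        rw [hone y i₀ j (fun h => hj h.symm) hi₀, Nat.cast_zero]
      rw [hFy]
      exact hcard_le y i₀
    · push_neg at hex
      have hFy : F y = 0 := by
        have h1 : F y = ∑ i : Fin n,
            ((E.filter (fun s => y ∈ (s + t i) +ᵥ C₁)).card : ℝ≥0∞) :=
          Finset.sum_congr rfl (fun i _ => hkey y i)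
        rw [h1]
        refine Finset.sum_eq_zero (fun i _ => ?_)
        rw [hex i, Finset.card_empty, Nat.cast_zero]
      rw [hFy]
      exact zero_le
  -- integrate
  have hIle : ∫⁻ y, F y ∂μ ≤ m * μ (Cw + V) := by
    calc ∫⁻ y, F y ∂μ ≤ ∫⁻ y, (toMeasurable μ (Cw + V)).indicator (fun _ => m) y ∂μ :=
          lintegral_mono hFle
      _ = m * μ (toMeasurable μ (Cw + V)) :=
          lintegral_indicator_const (measurableSet_toMeasurable μ _) m
      _ = m * μ (Cw + V) := by rw [measure_toMeasurable]
  have hmain : (n : ℝ≥0∞) * (E.card : ℝ≥0∞) * μ C₁ ≤ m * μ (Cw + V) := hFint ▸ hIle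
  have h2 : ((n : ℝ≥0∞) * (d / 2) * μ C₁) * μ (Cw + V) ≤ m * μ (Cw + V) := by
    calc ((n : ℝ≥0∞) * (d / 2) * μ C₁) * μ (Cw + V)
        = (n : ℝ≥0∞) * (d / 2 * μ (Cw + V)) * μ C₁ := by ring
      _ ≤ (n : ℝ≥0∞) * (E.card : ℝ≥0∞) * μ C₁ := by
          gcongr
          rw [hEcard]
          exact hkgt.le
      _ ≤ m * μ (Cw + V) := hmain
  have h3 : (n : ℝ≥0∞) * (d / 2) * μ C₁ ≤ m :=
    (ENNReal.mul_le_mul_iff_left hZpos.ne' hZfin).mp h2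
  rw [mul_assoc] at h3
  exact absurd h3 (not_le.mpr hmlt)
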